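/- arXiv:1809.08611 — 2 statements merged into one kernel-verified Lean document; each statement's English description precedes it below -/
import Mathlib

section
/- For every measure μ on X, the set F of all measurable functions f : X → [0,∞] such that ∫⁻ f dμ = ⨅ {∫⁻ w dμ : w ∈ ℰ, f ≤ w pointwise} is a convex cone which is closed under countable sums; that is: the zero function belongs to F; if f ∈ F and c ∈ (0,∞) then c·f ∈ F; and if (fₙ)_{n∈ℕ} is a sequence of functions in F, then the pointwise sum Σₙ fₙ belongs to F. -/
open MeasureTheory
open scoped ENNReal

/-- A function `w : X → [0,∞]` is excessive for the semigroup `(P t)_{t>0}` if it is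
measurable, supermedian (`∫⁻ w d(P t x) ≤ w x` for all `t > 0`), and
`⨆_{t>0} ∫⁻ w d(P t x) = w x` for all `x`. -/
def Excessive {X : Type*} [MeasurableSpace X] (P : ℝ → ProbabilityTheory.Kernel X X)
    (w : X → ℝ≥0∞) : Prop :=
  Measurable w ∧ (∀ t : ℝ, 0 < t → ∀ x : X, ∫⁻ y, w y ∂(P t x) ≤ w x) ∧
    ∀ x : X, (⨆ (t : ℝ) (_ : 0 < t), ∫⁻ y, w y ∂(P t x)) = w x

section Aux

variable {X : Type*} [MeasurableSpace X] {P : ℝ → ProbabilityTheory.Kernel X X}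

lemma excessive_zero' : Excessive P (fun _ => (0 : ℝ≥0∞)) := by
  refine ⟨measurable_const, ?_, ?_⟩ <;> simp

lemma excessive_smul' {w : X → ℝ≥0∞} (hw : Excessive P w) (c : ℝ≥0∞) :
    Excessive P (fun x => c * w x) := by
  refine ⟨hw.1.const_mul c, ?_, ?_⟩
  · intro t ht x
    rw [lintegral_const_mul c hw.1]
    exact mul_le_mul_right (hw.2.1 t ht x) c
  · intro x
    simp_rw [lintegral_const_mul c hw.1, ← ENNReal.mul_iSup]
    rw [hw.2.2 x]

lemma excessive_antitone
    (hsemigroup : ∀ s t : ℝ, 0 < s → 0 < t → ∀ f : X → ℝ≥0∞, Measurable f → ∀ x : X,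
      ∫⁻ y, f y ∂(P (s + t) x) = ∫⁻ y, ∫⁻ z, f z ∂(P t y) ∂(P s x))
    {w : X → ℝ≥0∞} (hw : Excessive P w) {s t : ℝ} (hs : 0 < s) (hst : s ≤ t) (x : X) :
    ∫⁻ y, w y ∂(P t x) ≤ ∫⁻ y, w y ∂(P s x) := by
  rcases eq_or_lt_of_le hst with rfl | h
  · exact le_rfl
  · have ht : t = s + (t - s) := by ring
    rw [ht, hsemigroup s (t - s) hs (by linarith) w hw.1 x]
    exact lintegral_mono fun y => hw.2.1 (t - s) (by linarith) y

lemma excessive_tsum'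
    (hsemigroup : ∀ s t : ℝ, 0 < s → 0 < t → ∀ f : X → ℝ≥0∞, Measurable f → ∀ x : X,
      ∫⁻ y, f y ∂(P (s + t) x) = ∫⁻ y, ∫⁻ z, f z ∂(P t y) ∂(P s x))
    {w : ℕ → X → ℝ≥0∞} (hw : ∀ n, Excessive P (w n)) :
    Excessive P (fun x => ∑' n, w n x) := by
  have hmeas : Measurable fun x => ∑' n, w n x := Measurable.ennreal_tsum fun n => (hw n).1
  have key : ∀ t : ℝ, ∀ x : X, ∫⁻ y, ∑' n, w n y ∂(P t x) = ∑' n, ∫⁻ y, w n y ∂(P t x) :=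
    fun t x => lintegral_tsum fun n => ((hw n).1).aemeasurable
  refine ⟨hmeas, ?_, ?_⟩
  · intro t ht x
    rw [key t x]
    exact ENNReal.tsum_le_tsum fun n => (hw n).2.1 t ht x
  · intro x
    set T : ℕ → ℝ := fun k => 1 / (k + 1) with hT
    have hTpos : ∀ k, 0 < T k := fun k => by positivity
    set h : ℕ → ℕ → ℝ≥0∞ := fun k n => ∫⁻ y, w n y ∂(P (T k) x) with hh
    have hmono : Monotone h := by
      intro k k' hkk' n
      refine excessive_antitone hsemigroup (hw n) (hTpos k') ?_ x
      apply one_div_le_one_div_of_le (by positivity)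
      have : (k : ℝ) ≤ k' := Nat.cast_le.mpr hkk'
      linarith
    have hsup_n : ∀ n, ⨆ k, h k n = w n x := by
      intro n
      refine le_antisymm (iSup_le fun k => (hw n).2.1 (T k) (hTpos k) x) ?_
      conv_lhs => rw [← (hw n).2.2 x]
      refine iSup_le fun t => iSup_le fun ht => ?_
      obtain ⟨k, hk⟩ := exists_nat_one_div_lt ht
      exact le_trans (excessive_antitone hsemigroup (hw n) (hTpos k) hk.le x)
        (le_iSup (fun k => h k n) k)
    have hswap : ⨆ k, ∑' n, h k n = ∑' n, w n x := by
      have hm : ∀ k, Measurable (h k) := fun k => measurable_of_countable _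
      have hs := lintegral_iSup (μ := Measure.count) hm hmono
      simp_rw [lintegral_count] at hs
      rw [← hs]
      congr 1
      ext n
      exact hsup_n n
    refine le_antisymm ?_ ?_
    · refine iSup_le fun t => iSup_le fun ht => ?_
      rw [key t x]
      exact ENNReal.tsum_le_tsum fun n => (hw n).2.1 t ht x
    · show (∑' n, w n x) ≤ ⨆ (t : ℝ) (_ : 0 < t), ∫⁻ y, ∑' n, w n y ∂(P t x)
      rw [← hswap]
      refine iSup_le fun k => ?_
      have heq : ∑' n, h k n = ∫⁻ y, ∑' n, w n y ∂(P (T k) x) := (key (T k) x).symm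
      rw [heq]
      exact le_iSup₂ (f := fun (t : ℝ) (_ : 0 < t) => ∫⁻ y, ∑' n, w n y ∂(P t x)) (T k) (hTpos k)

end Aux

/-- For every measure `μ`, the set `F` of all measurable functions `f : X → [0,∞]` such that
`∫⁻ f dμ = ⨅ {∫⁻ w dμ : w excessive, f ≤ w}` contains the zero function, is closed under
multiplication by constants `c ∈ (0,∞)`, and is closed under countable sums. -/
theorem excessive_approx_set_convexCone_countable_sums
    {X : Type*} [MeasurableSpace X] (P : ℝ → ProbabilityTheory.Kernel X X)
    (hsemigroup : ∀ s t : ℝ, 0 < s → 0 < t → ∀ f : X → ℝ≥0∞, Measurable f → ∀ x : X,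
      ∫⁻ y, f y ∂(P (s + t) x) = ∫⁻ y, ∫⁻ z, f z ∂(P t y) ∂(P s x))
    (μ : Measure X)
    (F : Set (X → ℝ≥0∞))
    (hF : F = {f | Measurable f ∧
      ∫⁻ x, f x ∂μ =
        ⨅ (w : X → ℝ≥0∞) (_ : Excessive P w) (_ : ∀ x, f x ≤ w x), ∫⁻ x, w x ∂μ}) :
    (fun _ : X => (0 : ℝ≥0∞)) ∈ F ∧
    (∀ f ∈ F, ∀ c : ℝ≥0∞, 0 < c → c ≠ ⊤ → (fun x => c * f x) ∈ F) ∧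
    (∀ f : ℕ → X → ℝ≥0∞, (∀ n, f n ∈ F) → (fun x => ∑' n, f n x) ∈ F) := by
  subst hF
  have hIle : ∀ f : X → ℝ≥0∞,
      ∫⁻ x, f x ∂μ ≤ ⨅ (w : X → ℝ≥0∞) (_ : Excessive P w) (_ : ∀ x, f x ≤ w x), ∫⁻ x, w x ∂μ :=
    fun f => le_iInf fun w => le_iInf fun hw => le_iInf fun hle => lintegral_mono hle
  have hIle' : ∀ f w : X → ℝ≥0∞, Excessive P w → (∀ x, f x ≤ w x) →
      (⨅ (w : X → ℝ≥0∞) (_ : Excessive P w) (_ : ∀ x, f x ≤ w x), ∫⁻ x, w x ∂μ)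
        ≤ ∫⁻ x, w x ∂μ :=
    fun f w hw hle => iInf_le_of_le w (iInf_le_of_le hw (iInf_le _ hle))
  refine ⟨⟨measurable_const, le_antisymm (hIle _) ?_⟩, ?_, ?_⟩
  · refine le_trans (hIle' _ (fun _ => 0) excessive_zero' fun x => le_rfl) ?_
    simp
  · rintro f ⟨hfm, hf⟩ c hc0 hctop
    refine ⟨hfm.const_mul c, le_antisymm (hIle _) ?_⟩
    rw [lintegral_const_mul c hfm]
    rcases eq_or_ne (∫⁻ x, f x ∂μ) ⊤ with htop | htop
    · rw [htop, ENNReal.mul_top hc0.ne']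
      exact le_top
    · refine ENNReal.le_of_forall_pos_le_add fun ε hε _ => ?_
      have hδ : (c⁻¹ * ε : ℝ≥0∞) ≠ 0 := by
        apply mul_ne_zero (ENNReal.inv_ne_zero.mpr hctop)
        exact_mod_cast hε.ne'
      have hlt : (⨅ (w : X → ℝ≥0∞) (_ : Excessive P w) (_ : ∀ x, f x ≤ w x), ∫⁻ x, w x ∂μ)
          < ∫⁻ x, f x ∂μ + c⁻¹ * ε := by
        rw [← hf]
        exact ENNReal.lt_add_right htop hδ
      simp only [iInf_lt_iff] at hlt
      obtain ⟨w, hw, hle, hwlt⟩ := hlt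
      refine le_trans (hIle' _ (fun x => c * w x) (excessive_smul' hw c)
        fun x => mul_le_mul_right (hle x) c) ?_
      rw [lintegral_const_mul c hw.1]
      calc c * ∫⁻ x, w x ∂μ ≤ c * (∫⁻ x, f x ∂μ + c⁻¹ * ε) := mul_le_mul_right hwlt.le c
        _ = c * ∫⁻ x, f x ∂μ + c * (c⁻¹ * ε) := by rw [mul_add]
        _ = c * ∫⁻ x, f x ∂μ + ε := by
            rw [← mul_assoc, ENNReal.mul_inv_cancel hc0.ne' hctop, one_mul]
  · intro f hf
    have hfm : ∀ n, Measurable (f n) := fun n => (hf n).1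
    refine ⟨Measurable.ennreal_tsum hfm, le_antisymm (hIle _) ?_⟩
    rw [lintegral_tsum fun n => (hfm n).aemeasurable]
    rcases eq_or_ne (∑' n, ∫⁻ x, f n x ∂μ) ⊤ with htop | htop
    · rw [htop]; exact le_top
    · refine ENNReal.le_of_forall_pos_le_add fun ε hε _ => ?_
      set δ : ℕ → ℝ≥0∞ := fun n => (ε : ℝ≥0∞) * 2⁻¹ ^ (n + 1) with hδdef
      have hδ0 : ∀ n, δ n ≠ 0 := by
        intro n
        apply mul_ne_zero (by exact_mod_cast hε.ne')
        exact pow_ne_zero _ (by simp)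
      have hδsum : ∑' n, δ n = ε := by
        rw [hδdef, ENNReal.tsum_mul_left]
        have h2 : ∑' n : ℕ, (2⁻¹ : ℝ≥0∞) ^ (n + 1) = 1 := by
          simp_rw [pow_succ']
          rw [ENNReal.tsum_mul_left, ENNReal.tsum_geometric, ENNReal.one_sub_inv_two, inv_inv,
            ENNReal.inv_mul_cancel (by norm_num) (by norm_num)]
        rw [h2, mul_one]
      have hchoice : ∀ n, ∃ w : X → ℝ≥0∞, Excessive P w ∧ (∀ x, f n x ≤ w x) ∧
          ∫⁻ x, w x ∂μ < ∫⁻ x, f n x ∂μ + δ n := by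
        intro n
        have hfin : ∫⁻ x, f n x ∂μ ≠ ⊤ := (ENNReal.lt_top_of_tsum_ne_top htop n).ne
        have hlt : (⨅ (w : X → ℝ≥0∞) (_ : Excessive P w) (_ : ∀ x, f n x ≤ w x), ∫⁻ x, w x ∂μ)
            < ∫⁻ x, f n x ∂μ + δ n := by
          rw [← (hf n).2]
          exact ENNReal.lt_add_right hfin (hδ0 n)
        simp only [iInf_lt_iff] at hlt
        obtain ⟨w, h1, h2, h3⟩ := hlt
        exact ⟨w, h1, h2, h3⟩
      choose w hw hle hwlt using hchoice
      refine le_trans (hIle' _ (fun x => ∑' n, w n x) (excessive_tsum' hsemigroup hw)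
        fun x => ENNReal.tsum_le_tsum fun n => hle n x) ?_
      rw [lintegral_tsum fun n => (hw n).1.aemeasurable]
      calc ∑' n, ∫⁻ x, w n x ∂μ ≤ ∑' n, (∫⁻ x, f n x ∂μ + δ n) :=
            ENNReal.tsum_le_tsum fun n => (hwlt n).le
        _ = ∑' n, ∫⁻ x, f n x ∂μ + ε := by rw [ENNReal.tsum_add, hδsum]
end

section
/- Suppose there are a ∈ (0,∞) and η ∈ (0,1) and a measurable function h : X → [0,∞] such that a ≤ h(x) for all x ∈ X, ∫⁻ h dQ(x) ≤ η·h(x) for all x ∈ X, and ∫⁻ h dK(x) ≤ h(x) for all x ∈ X. Then: (i) for every n ∈ ℕ and x ∈ X, ∫⁻ h d(Qⁿ x) ≤ ηⁿ·h(x), where Qⁿ denotes the n-fold composition of the kernel Q (with Q⁰ the identity kernel); and (ii) for every x ∈ X, Σ_{n=0}^∞ ∫⁻ (fun y => (Qⁿ y)(X)) dK(x) ≤ h(x) / (a·(1−η)); in particular this sum is finite whenever h(x) < ∞. -/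
open MeasureTheory ProbabilityTheory
open scoped ENNReal

/-- `kernelPow Q n` is the `n`-fold composition of the kernel `Q` with itself,
with `kernelPow Q 0` the identity kernel. -/
noncomputable def kernelPow {X : Type*} [MeasurableSpace X] (Q : Kernel X X) :
    ℕ → Kernel X X
  | 0 => Kernel.id
  | n + 1 => Q ∘ₖ kernelPow Q n

/-- Let `K`, `Q` be kernels on `X`, `a ∈ (0,∞)`, `η ∈ (0,1)` and `h : X → [0,∞]` measurable
with `a ≤ h`, `∫⁻ h dQ(x) ≤ η·h(x)` and `∫⁻ h dK(x) ≤ h(x)` for all `x`.  Then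
(i) `∫⁻ h d(Qⁿ x) ≤ ηⁿ·h(x)` for all `n` and `x`, and
(ii) `∑ₙ ∫⁻ (fun y => (Qⁿ y)(X)) dK(x) ≤ h(x) / (a·(1−η))` for all `x`; in particular this
sum is finite whenever `h x < ∞`. -/
theorem expected_visits_estimate
    {X : Type*} [MeasurableSpace X] (K Q : Kernel X X)
    (a η : ℝ≥0∞) (ha0 : 0 < a) (ha : a < ⊤) (hη0 : 0 < η) (hη1 : η < 1)
    (h : X → ℝ≥0∞) (hmeas : Measurable h)
    (hah : ∀ x, a ≤ h x)
    (hQ : ∀ x, ∫⁻ y, h y ∂(Q x) ≤ η * h x)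
    (hK : ∀ x, ∫⁻ y, h y ∂(K x) ≤ h x) :
    (∀ (n : ℕ) (x : X), ∫⁻ y, h y ∂(kernelPow Q n x) ≤ η ^ n * h x) ∧
    (∀ x : X,
      (∑' n : ℕ, ∫⁻ y, kernelPow Q n y Set.univ ∂(K x)) ≤ h x / (a * (1 - η)) ∧
      (h x < ⊤ → (∑' n : ℕ, ∫⁻ y, kernelPow Q n y Set.univ ∂(K x)) < ⊤)) := by
  have h1η : (1 : ℝ≥0∞) - η ≠ 0 := (tsub_pos_of_lt hη1).ne'
  have hi : ∀ (n : ℕ) (x : X), ∫⁻ y, h y ∂(kernelPow Q n x) ≤ η ^ n * h x := by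
    intro n
    induction n with
    | zero => intro x; simp only [kernelPow, Kernel.id_apply, lintegral_dirac' _ hmeas, pow_zero, one_mul, le_refl]
    | succ n ih =>
      intro x
      rw [show kernelPow Q (n+1) = Q ∘ₖ kernelPow Q n from rfl,
        Kernel.lintegral_comp _ _ _ hmeas]
      calc ∫⁻ y, ∫⁻ z, h z ∂(Q y) ∂(kernelPow Q n x)
          ≤ ∫⁻ y, η * h y ∂(kernelPow Q n x) := lintegral_mono fun y => hQ y
        _ = η * ∫⁻ y, h y ∂(kernelPow Q n x) := lintegral_const_mul _ hmeas
        _ ≤ η * (η ^ n * h x) := mul_le_mul_right (ih x) _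
        _ = η ^ (n + 1) * h x := by ring
  refine ⟨hi, fun x => ?_⟩
  have hbound : ∀ (n : ℕ) (y : X), kernelPow Q n y Set.univ ≤ η ^ n * h y / a := by
    intro n y
    rw [ENNReal.le_div_iff_mul_le (Or.inl ha0.ne') (Or.inl ha.ne)]
    calc kernelPow Q n y Set.univ * a = ∫⁻ _, a ∂(kernelPow Q n y) := by
          rw [lintegral_const, mul_comm]
      _ ≤ ∫⁻ z, h z ∂(kernelPow Q n y) := lintegral_mono fun z => hah z
      _ ≤ η ^ n * h y := hi n y
  have hterm : ∀ n : ℕ, ∫⁻ y, kernelPow Q n y Set.univ ∂(K x) ≤ η ^ n * (h x / a) := by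
    intro n
    calc ∫⁻ y, kernelPow Q n y Set.univ ∂(K x)
        ≤ ∫⁻ y, η ^ n * h y / a ∂(K x) := lintegral_mono fun y => hbound n y
      _ = η ^ n / a * ∫⁻ y, h y ∂(K x) := by
          rw [← lintegral_const_mul _ hmeas]
          congr 1; ext y
          rw [div_eq_mul_inv, div_eq_mul_inv, mul_assoc, mul_comm (h y), ← mul_assoc]
      _ ≤ η ^ n / a * h x := mul_le_mul_right (hK x) _
      _ = η ^ n * (h x / a) := by rw [div_eq_mul_inv, div_eq_mul_inv]; ring
  have hsum : (∑' n : ℕ, ∫⁻ y, kernelPow Q n y Set.univ ∂(K x)) ≤ h x / (a * (1 - η)) := by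
    calc (∑' n : ℕ, ∫⁻ y, kernelPow Q n y Set.univ ∂(K x))
        ≤ ∑' n : ℕ, η ^ n * (h x / a) := ENNReal.tsum_le_tsum hterm
      _ = (1 - η)⁻¹ * (h x / a) := by rw [ENNReal.tsum_mul_right, ENNReal.tsum_geometric]
      _ = h x / (a * (1 - η)) := by
          rw [div_eq_mul_inv, div_eq_mul_inv,
            ENNReal.mul_inv (Or.inl ha0.ne') (Or.inl ha.ne)]
          ring
  refine ⟨hsum, fun hfin => lt_of_le_of_lt hsum ?_⟩
  exact ENNReal.div_lt_top hfin.ne (mul_ne_zero ha0.ne' h1η)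
end
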